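/- Let F be a finite field, k ≤ n, x_0, x_1, …, x_n pairwise distinct elements of F, f_1, …, f_{m'} polynomials over F each of degree less than k, and B ⊆ {1, …, n} with |B| ≤ n − k. Suppose that for every i ∉ B the received share is Y_i = (f_1(x_i), …, f_{m'}(x_i)). Then there exists J ⊆ {1, …, n} ∖ B with |J| = k, and for every such J, any tuple of polynomials (g_1, …, g_{m'}) over F of degree less than k with g_l(x_i) = (Y_i)_l for all i ∈ J and all l satisfies g_l(x_0) = f_l(x_0) for all l; i.e., reconstruction from any k uncorrupted shares recovers the true secret. -/

import Mathlib

/-- Robust reconstruction for `m'` parallel executions of Shamir's `(n, k)`-threshold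
scheme over a finite field `F`: with pairwise distinct points `x₀, x₁, …, xₙ`, true
polynomials `f₁, …, f_{m'}` of degree less than `k`, and a set `B` of corrupted indices
of size at most `n - k`, if the received share `Yᵢ` is correct for every `i ∉ B`, then
there exists a `k`-subset of uncorrupted indices, and reconstruction from any `k`
uncorrupted shares recovers the true secret `(f₁(x₀), …, f_{m'}(x₀))`. -/
theorem dske_shamir_robust_reconstruction {F : Type*} [Field F] [Fintype F]
    (n k m' : ℕ) (hk : 0 < k) (hkn : k ≤ n) (hm' : 0 < m')
    (x : Fin (n + 1) → F) (hx : Function.Injective x)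
    (f : Fin m' → Polynomial F) (hf : ∀ l, (f l).degree < (k : WithBot ℕ))
    (B : Finset (Fin n)) (hB : B.card ≤ n - k)
    (Y : Fin n → Fin m' → F)
    (hY : ∀ i ∉ B, ∀ l, Y i l = (f l).eval (x i.succ)) :
    (∃ J : Finset (Fin n), Disjoint J B ∧ J.card = k) ∧
      ∀ J : Finset (Fin n), Disjoint J B → J.card = k →
        ∀ g : Fin m' → Polynomial F, (∀ l, (g l).degree < (k : WithBot ℕ)) →
          (∀ l, ∀ i ∈ J, (g l).eval (x i.succ) = Y i l) →
          ∀ l, (g l).eval (x 0) = (f l).eval (x 0) := by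
  classical
  constructor
  · have hcard : k ≤ Bᶜ.card := by
      have : Bᶜ.card = n - B.card := by
        rw [Finset.card_compl, Fintype.card_fin]
      omega
    obtain ⟨J, hJ, hJc⟩ := Finset.exists_subset_card_eq (s := Bᶜ) hcard
    exact ⟨J, Finset.disjoint_left.mpr fun a ha => Finset.mem_compl.mp (hJ ha), hJc⟩
  · intro J hJB hJk g hg hgY l
    have key : g l - f l = 0 := by
      apply Polynomial.eq_zero_of_natDegree_lt_card_of_eval_eq_zero' _
        (J.image (fun i => x i.succ))
      · intro y hy
        obtain ⟨i, hi, rfl⟩ := Finset.mem_image.mp hy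
        have hiB : i ∉ B := Finset.disjoint_left.mp hJB hi
        simp [Polynomial.eval_sub, hgY l i hi, hY i hiB l]
      · have hcard : (J.image (fun i => x i.succ)).card = k := by
          rw [Finset.card_image_of_injective _ (fun a b h => by
            simpa using hx h), hJk]
        rw [hcard]
        by_cases h0 : g l - f l = 0
        · simp [h0, hk]
        · have : (g l - f l).degree < (k : WithBot ℕ) :=
            lt_of_le_of_lt (Polynomial.degree_sub_le _ _) (max_lt (hg l) (hf l))
          exact (Polynomial.natDegree_lt_iff_degree_lt h0).mpr this
    have := sub_eq_zero.mp key
    rw [this]
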